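/- (KKT fixed-point characterization at the optimum) Fix γ ∈ (0,1], λ > 0, a finite index set T, and symmetric matrices H_t ∈ ℝ^{d×d} (t ∈ T). If M* is optimal for λ, i.e., M* ⪰ O and P_λ(M*) ≤ P_λ(M') for all M' ⪰ O, then λM* = [S*]_+, where S* := −Σ_{t∈T} ℓ_γ'(⟨M*, H_t⟩) H_t. -/

import Mathlib

open scoped BigOperators
open scoped Matrix

/-- Frobenius inner product ⟨A,B⟩ = tr(Aᵀ B). -/
noncomputable def frob {d : ℕ} (A B : Matrix (Fin d) (Fin d) ℝ) : ℝ :=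
  Matrix.trace (Aᵀ * B)

/-- Frobenius norm ‖A‖_F = √⟨A,A⟩. -/
noncomputable def frobNorm {d : ℕ} (A : Matrix (Fin d) (Fin d) ℝ) : ℝ :=
  Real.sqrt (frob A A)

/-- Smoothed hinge loss ℓ_γ. -/
noncomputable def shinge (γ x : ℝ) : ℝ :=
  if 1 < x then 0 else if 1 - γ ≤ x then (1 - x) ^ 2 / (2 * γ) else 1 - x - γ / 2

/-- Derivative of the smoothed hinge loss ℓ_γ'. -/
noncomputable def shinge' (γ x : ℝ) : ℝ :=
  if 1 < x then 0 else if 1 - γ ≤ x then -(1 - x) / γ else -1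

/-- Primal objective P_λ(M) = Σ_t ℓ_γ(⟨M,H_t⟩) + (λ/2)‖M‖_F². -/
noncomputable def Pobj {d : ℕ} {ι : Type*} (γ lam : ℝ) (T : Finset ι)
    (H : ι → Matrix (Fin d) (Fin d) ℝ) (M : Matrix (Fin d) (Fin d) ℝ) : ℝ :=
  (∑ t ∈ T, shinge γ (frob M (H t))) + lam / 2 * frobNorm M ^ 2

/-- Gradient ∇P_λ(M) = Σ_t ℓ_γ'(⟨M,H_t⟩) H_t + λ M. -/
noncomputable def gradP {d : ℕ} {ι : Type*} (γ lam : ℝ) (T : Finset ι)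
    (H : ι → Matrix (Fin d) (Fin d) ℝ) (M : Matrix (Fin d) (Fin d) ℝ) :
    Matrix (Fin d) (Fin d) ℝ :=
  (∑ t ∈ T, shinge' γ (frob M (H t)) • H t) + lam • M

lemma frob_eq {d : ℕ} (A B : Matrix (Fin d) (Fin d) ℝ) :
    frob A B = ∑ i, ∑ j, A j i * B j i := by
  simp [frob, Matrix.trace, Matrix.mul_apply, Matrix.diag, Matrix.transpose_apply]

lemma frob_symm {d : ℕ} (A B : Matrix (Fin d) (Fin d) ℝ) : frob A B = frob B A := by
  simp [frob_eq, mul_comm]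

lemma frob_add_left {d : ℕ} (A B C : Matrix (Fin d) (Fin d) ℝ) :
    frob (A + B) C = frob A C + frob B C := by
  simp [frob_eq, add_mul, Finset.sum_add_distrib]

lemma frob_smul_left {d : ℕ} (c : ℝ) (A B : Matrix (Fin d) (Fin d) ℝ) :
    frob (c • A) B = c * frob A B := by
  simp [frob_eq, Finset.mul_sum, mul_assoc]

lemma frob_neg_left {d : ℕ} (A B : Matrix (Fin d) (Fin d) ℝ) :
    frob (-A) B = -frob A B := by
  simp [frob_eq, Finset.sum_neg_distrib]

lemma frob_sum_left {d : ℕ} {ι : Type*} (T : Finset ι)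
    (f : ι → Matrix (Fin d) (Fin d) ℝ) (B : Matrix (Fin d) (Fin d) ℝ) :
    frob (∑ t ∈ T, f t) B = ∑ t ∈ T, frob (f t) B := by
  classical
  induction T using Finset.induction_on with
  | empty => simp [frob_eq]
  | insert a s h ih => rw [Finset.sum_insert h, Finset.sum_insert h, frob_add_left, ih]

lemma frob_self_nonneg {d : ℕ} (A : Matrix (Fin d) (Fin d) ℝ) : 0 ≤ frob A A := by
  rw [frob_eq]
  exact Finset.sum_nonneg fun i _ => Finset.sum_nonneg fun j _ => mul_self_nonneg _

lemma frobNorm_sq {d : ℕ} (A : Matrix (Fin d) (Fin d) ℝ) : frobNorm A ^ 2 = frob A A :=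
  Real.sq_sqrt (frob_self_nonneg A)

lemma shinge_quad {γ a s : ℝ} (hγ : 0 < γ) :
    shinge γ (a + s) ≤ shinge γ a + shinge' γ a * s + s ^ 2 / (2 * γ) := by
  have h2γ : 0 < 2 * γ := by linarith
  have hγ' : γ ≠ 0 := ne_of_gt hγ
  have h2γ' : 2 * γ ≠ 0 := ne_of_gt h2γ
  unfold shinge shinge'
  split_ifs with h1 h2 h3 h2 h3 h4 h3 h4
  · have e : (0:ℝ) + 0 * s + s ^ 2 / (2 * γ) = s ^ 2 / (2 * γ) := by ring
    rw [e]; positivity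
  · have e : (1 - a) ^ 2 / (2 * γ) + -(1 - a) / γ * s + s ^ 2 / (2 * γ)
        = (1 - a - s) ^ 2 / (2 * γ) := by field_simp; ring
    rw [e]; positivity
  · have e : 1 - a - γ / 2 + -1 * s + s ^ 2 / (2 * γ)
        = (2 * γ * (1 - a - s) - γ ^ 2 + s ^ 2) / (2 * γ) := by field_simp; ring
    rw [e]
    apply div_nonneg _ h2γ.le
    nlinarith [sq_nonneg (s - γ), mul_pos hγ (show (0:ℝ) < 1 - a - γ by linarith)]
  · have e : (0:ℝ) + 0 * s + s ^ 2 / (2 * γ) = s ^ 2 / (2 * γ) := by ring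
    rw [e, div_le_div_iff₀ h2γ h2γ]
    have h5 : (0:ℝ) ≤ a - 1 := by linarith
    have h6 : (0:ℝ) ≤ 1 - a - 2 * s := by nlinarith
    nlinarith [mul_nonneg (mul_nonneg h5 h6) h2γ.le]
  · have e : (1 - a) ^ 2 / (2 * γ) + -(1 - a) / γ * s + s ^ 2 / (2 * γ)
        = (1 - a - s) ^ 2 / (2 * γ) := by field_simp; ring
    rw [e, div_le_div_iff₀ h2γ h2γ]
    nlinarith
  · have e : 1 - a - γ / 2 + -1 * s + s ^ 2 / (2 * γ)
        = (2 * γ * (1 - a - s) - γ ^ 2 + s ^ 2) / (2 * γ) := by field_simp; ring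
    rw [e, div_le_div_iff₀ h2γ h2γ]
    have h5 : 0 ≤ s - (γ - (1 - (a + s))) := by linarith
    have h6 : 0 ≤ s + (γ - (1 - (a + s))) := by linarith
    nlinarith [mul_nonneg h5 h6, h2γ.le, mul_pos h2γ h2γ]
  · have e : (0:ℝ) + 0 * s + s ^ 2 / (2 * γ) = s ^ 2 / (2 * γ) := by ring
    rw [e, ← sub_nonneg]
    have e2 : s ^ 2 / (2 * γ) - (1 - (a + s) - γ / 2)
        = (s ^ 2 - 2 * γ * (1 - a - s) + γ ^ 2) / (2 * γ) := by field_simp; ring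
    rw [e2]
    apply div_nonneg _ h2γ.le
    nlinarith [sq_nonneg (s + γ), mul_pos h2γ (show (0:ℝ) < a - 1 by linarith)]
  · rw [← sub_nonneg]
    have e : (1 - a) ^ 2 / (2 * γ) + -(1 - a) / γ * s + s ^ 2 / (2 * γ)
          - (1 - (a + s) - γ / 2)
        = ((1 - a - s) ^ 2 - 2 * γ * (1 - a - s) + γ ^ 2) / (2 * γ) := by field_simp; ring
    rw [e]
    apply div_nonneg _ h2γ.le
    nlinarith [sq_nonneg (1 - a - s - γ)]
  · have : 0 ≤ s ^ 2 / (2 * γ) := by positivity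
    linarith

lemma eps_lemma {C D : ℝ} (hC : 0 ≤ C)
    (h : ∀ ε : ℝ, 0 < ε → ε ≤ 1 → 0 ≤ ε * D + ε ^ 2 * C) : 0 ≤ D := by
  by_contra hD
  push_neg at hD
  set ε := min 1 (-D / (2 * (C + 1))) with hε
  have hpos : 0 < ε := lt_min one_pos (div_pos (by linarith) (by positivity))
  have hle : ε ≤ 1 := min_le_left _ _
  have h2 := h ε hpos hle
  have hεC : ε * C ≤ -D / 2 := by
    have : ε ≤ -D / (2 * (C + 1)) := min_le_right _ _
    calc ε * C ≤ (-D / (2 * (C + 1))) * C := by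
          exact mul_le_mul_of_nonneg_right this hC
      _ ≤ -D / 2 := by
          rw [div_mul_eq_mul_div, div_le_div_iff₀ (by positivity) (by norm_num)]
          nlinarith
  nlinarith [mul_le_mul_of_nonneg_left hεC hpos.le, mul_pos hpos (neg_pos.2 hD)]

lemma frob_add_right {d : ℕ} (A B C : Matrix (Fin d) (Fin d) ℝ) :
    frob A (B + C) = frob A B + frob A C := by
  rw [frob_symm, frob_add_left, frob_symm B A, frob_symm C A]

lemma frob_smul_right {d : ℕ} (c : ℝ) (A B : Matrix (Fin d) (Fin d) ℝ) :
    frob A (c • B) = c * frob A B := by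
  rw [frob_symm, frob_smul_left, frob_symm B A]

lemma frob_neg_right {d : ℕ} (A B : Matrix (Fin d) (Fin d) ℝ) :
    frob A (-B) = -frob A B := by
  rw [frob_symm, frob_neg_left, frob_symm B A]

lemma psd_of {d : ℕ} {M : Matrix (Fin d) (Fin d) ℝ}
    (h1 : ∀ i j, M i j = M j i) (h2 : ∀ x, 0 ≤ dotProduct x (M *ᵥ x)) :
    M.PosSemidef := by
  refine Matrix.PosSemidef.of_dotProduct_mulVec_nonneg ?_ (fun x => by simpa using h2 x)
  ext i j
  simp [Matrix.conjTranspose_apply, h1 i j]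

lemma psd_quad {d : ℕ} {M : Matrix (Fin d) (Fin d) ℝ} (h : M.PosSemidef)
    (x : Fin d → ℝ) : 0 ≤ dotProduct x (M *ᵥ x) := by
  simpa using h.dotProduct_mulVec_nonneg x

lemma psd_entry_symm {d : ℕ} {M : Matrix (Fin d) (Fin d) ℝ} (h : M.PosSemidef)
    (i j : Fin d) : M i j = M j i := by
  simpa using h.1.apply j i

lemma psd_add {d : ℕ} {A B : Matrix (Fin d) (Fin d) ℝ}
    (hA : A.PosSemidef) (hB : B.PosSemidef) : (A + B).PosSemidef := by
  refine psd_of (fun i j => by rw [Matrix.add_apply, Matrix.add_apply,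
    psd_entry_symm hA, psd_entry_symm hB]) (fun x => ?_)
  rw [Matrix.add_mulVec, dotProduct_add]
  exact add_nonneg (psd_quad hA x) (psd_quad hB x)

lemma psd_smul {d : ℕ} {c : ℝ} {A : Matrix (Fin d) (Fin d) ℝ}
    (hc : 0 ≤ c) (hA : A.PosSemidef) : (c • A).PosSemidef := by
  refine psd_of (fun i j => by rw [Matrix.smul_apply, Matrix.smul_apply,
    psd_entry_symm hA]) (fun x => ?_)
  rw [Matrix.smul_mulVec, dotProduct_smul]
  exact mul_nonneg hc (psd_quad hA x)

lemma psd_vecMulVec {d : ℕ} (v : Fin d → ℝ) : (Matrix.vecMulVec v v).PosSemidef := by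
  refine psd_of (fun i j => by simp [Matrix.vecMulVec_apply, mul_comm]) (fun x => ?_)
  have : dotProduct x (Matrix.vecMulVec v v *ᵥ x)
      = (∑ i, v i * x i) * (∑ j, v j * x j) := by
    rw [Finset.sum_mul_sum]
    simp only [dotProduct, Matrix.mulVec, Matrix.vecMulVec_apply,
      dotProduct, Finset.mul_sum]
    exact Finset.sum_congr rfl fun i _ => Finset.sum_congr rfl fun j _ => by ring
  rw [this]
  exact mul_self_nonneg _

lemma frob_vecMulVec {d : ℕ} (G : Matrix (Fin d) (Fin d) ℝ) (x : Fin d → ℝ) :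
    frob G (Matrix.vecMulVec x x) = dotProduct x (G *ᵥ x) := by
  rw [frob_eq]
  simp only [dotProduct, Matrix.mulVec, dotProduct, Finset.mul_sum,
    Matrix.vecMulVec_apply]
  rw [Finset.sum_comm]
  exact Finset.sum_congr rfl fun j _ => Finset.sum_congr rfl fun i _ => by ring

/-- KKT fixed-point characterization at the optimum: λM* = [S*]_+ where
S* = −Σ_t ℓ_γ'(⟨M*,H_t⟩)H_t.  The identity λM* = [S*]_+ is expressed through
the unique characterization of the positive-part decomposition:
λM* ⪰ O, S* − λM* ⪯ O and ⟨λM*, S* − λM*⟩ = 0. -/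
theorem kkt_fixed_point {d : ℕ} {ι : Type*} (γ lam : ℝ)
    (hγ : 0 < γ) (hγ1 : γ ≤ 1) (hlam : 0 < lam)
    (T : Finset ι) (H : ι → Matrix (Fin d) (Fin d) ℝ)
    (hH : ∀ t ∈ T, (H t).IsSymm)
    (Mstar : Matrix (Fin d) (Fin d) ℝ) (hMstar : Mstar.PosSemidef)
    (hopt : ∀ M' : Matrix (Fin d) (Fin d) ℝ, M'.PosSemidef →
      Pobj γ lam T H Mstar ≤ Pobj γ lam T H M') :
    let S := -(∑ t ∈ T, shinge' γ (frob Mstar (H t)) • H t)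
    (lam • Mstar).PosSemidef ∧ (-(S - lam • Mstar)).PosSemidef ∧
      frob (lam • Mstar) (S - lam • Mstar) = 0 := by
  intro S
  have hS : S = -(∑ t ∈ T, shinge' γ (frob Mstar (H t)) • H t) := rfl
  set G := gradP γ lam T H Mstar with hGdef
  -- the key variational claim
  have claim : ∀ N : Matrix (Fin d) (Fin d) ℝ,
      (∀ ε : ℝ, 0 < ε → ε ≤ 1 → (Mstar + ε • N).PosSemidef) → 0 ≤ frob G N := by
    intro N hfeas
    set C := (∑ t ∈ T, (frob N (H t)) ^ 2) / (2 * γ) + lam / 2 * frob N N with hC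
    have hCnn : 0 ≤ C := add_nonneg
      (div_nonneg (Finset.sum_nonneg fun t _ => sq_nonneg _) (by linarith))
      (mul_nonneg (by positivity) (frob_self_nonneg N))
    apply eps_lemma hCnn
    intro ε hε hε1
    have hG : frob G N = (∑ t ∈ T, shinge' γ (frob Mstar (H t)) * frob N (H t))
        + lam * frob Mstar N := by
      rw [hGdef]
      unfold gradP
      rw [frob_add_left, frob_sum_left, frob_smul_left]
      congr 1
      exact Finset.sum_congr rfl fun t _ => by rw [frob_smul_left, frob_symm (H t) N]
    have hub : Pobj γ lam T H (Mstar + ε • N)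
        ≤ Pobj γ lam T H Mstar + ε * frob G N + ε ^ 2 * C := by
      have hfrobt : ∀ t : ι, frob (Mstar + ε • N) (H t)
          = frob Mstar (H t) + ε * frob N (H t) := fun t => by
        rw [frob_add_left, frob_smul_left]
      have hnorm : frobNorm (Mstar + ε • N) ^ 2
          = frob Mstar Mstar + 2 * ε * frob Mstar N + ε ^ 2 * frob N N := by
        rw [frobNorm_sq]
        simp only [frob_add_left, frob_add_right, frob_smul_left, frob_smul_right,
          frob_symm N Mstar]
        ring
      have hsum : ∑ t ∈ T, shinge γ (frob Mstar (H t) + ε * frob N (H t))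
          ≤ ∑ t ∈ T, (shinge γ (frob Mstar (H t))
            + shinge' γ (frob Mstar (H t)) * (ε * frob N (H t))
            + (ε * frob N (H t)) ^ 2 / (2 * γ)) :=
        Finset.sum_le_sum fun t _ => shinge_quad hγ
      have heq : ∑ t ∈ T, (shinge γ (frob Mstar (H t))
            + shinge' γ (frob Mstar (H t)) * (ε * frob N (H t))
            + (ε * frob N (H t)) ^ 2 / (2 * γ))
          = (∑ t ∈ T, shinge γ (frob Mstar (H t)))
            + ε * (∑ t ∈ T, shinge' γ (frob Mstar (H t)) * frob N (H t))
            + ε ^ 2 * ((∑ t ∈ T, (frob N (H t)) ^ 2) / (2 * γ)) := by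
        rw [Finset.sum_add_distrib, Finset.sum_add_distrib, Finset.mul_sum,
          Finset.sum_div, Finset.mul_sum]
        congr 1
        · congr 1
          exact Finset.sum_congr rfl fun t _ => by ring
        · exact Finset.sum_congr rfl fun t _ => by ring
      unfold Pobj
      simp only [hfrobt, hnorm]
      rw [hG, hC, frobNorm_sq]
      calc (∑ t ∈ T, shinge γ (frob Mstar (H t) + ε * frob N (H t)))
            + lam / 2 * (frob Mstar Mstar + 2 * ε * frob Mstar N + ε ^ 2 * frob N N)
          ≤ (∑ t ∈ T, (shinge γ (frob Mstar (H t))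
              + shinge' γ (frob Mstar (H t)) * (ε * frob N (H t))
              + (ε * frob N (H t)) ^ 2 / (2 * γ)))
            + lam / 2 * (frob Mstar Mstar + 2 * ε * frob Mstar N + ε ^ 2 * frob N N) := by
            linarith
        _ = _ := by rw [heq]; ring
    have hlow := hopt (Mstar + ε • N) (hfeas ε hε hε1)
    linarith
  -- G is symmetric entrywise
  have hGsymm : ∀ i j, G i j = G j i := by
    intro i j
    rw [hGdef]
    unfold gradP
    simp only [Matrix.add_apply, Matrix.smul_apply, Matrix.sum_apply]
    rw [psd_entry_symm hMstar]
    congr 1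
    exact Finset.sum_congr rfl fun t ht => by
      rw [(hH t ht).apply]
  -- the matrix appearing in parts 2 and 3 equals G
  have hSG : -(S - lam • Mstar) = G := by
    rw [hS, neg_sub, sub_neg_eq_add, hGdef]
    unfold gradP
    exact add_comm _ _
  have hSG' : S - lam • Mstar = -G := by rw [← hSG, neg_neg]
  -- part 2: G is PSD
  have hGpsd : G.PosSemidef := by
    refine psd_of hGsymm fun x => ?_
    rw [← frob_vecMulVec]
    exact claim _ fun ε hε _ => psd_add hMstar (psd_smul hε.le (psd_vecMulVec x))
  -- part 3 ingredients
  have h1 : 0 ≤ frob G Mstar :=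
    claim Mstar fun ε hε _ => psd_add hMstar (psd_smul hε.le hMstar)
  have h2 : 0 ≤ frob G (-Mstar) := by
    refine claim (-Mstar) fun ε hε hε1 => ?_
    have : Mstar + ε • (-Mstar) = (1 - ε) • Mstar := by
      ext i j
      simp [Matrix.smul_apply, Matrix.add_apply]
      ring
    rw [this]
    exact psd_smul (by linarith) hMstar
  rw [frob_neg_right] at h2
  have hfGM : frob G Mstar = 0 := le_antisymm (by linarith) h1
  refine ⟨psd_smul hlam.le hMstar, ?_, ?_⟩
  · rw [hSG]; exact hGpsd
  · rw [hSG', frob_smul_left, frob_neg_right, frob_symm Mstar G, hfGM]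
    ring
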